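/- Let q be a real number with q ≠ 0 and q ≠ 1, let n ≥ 1, and let φ_1, …, φ_n, φ : ℝ → ℝ. Define recursively φ_j^{(0)} = φ_j and φ^{(0)} = φ, and for 1 ≤ i ≤ n set φ_j^{(i)} = D_{φ_i^{(i−1)}} φ_j^{(i−1)} for j > i and φ^{(i)} = D_{φ_i^{(i−1)}} φ^{(i−1)}. Assume that for each i = 1, …, n the q-Wronskian W_i^q(φ_1, …, φ_i)(x) ≠ 0 for all x ≠ 0. Then for every x ≠ 0, the n-fold Darboux transform of φ is the ratio of q-Wronskians: φ^{(n)}(x) = W_{n+1}^q(φ_1, …, φ_n, φ)(x) / W_n^q(φ_1, …, φ_n)(x). -/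

import Mathlib

/-- The `q`-derivative: `(∂_q f)(x) = (f(qx) − f(x))/(x(q−1))` (zero at `x = 0`). -/
noncomputable def qDeriv (q : ℝ) (f : ℝ → ℝ) : ℝ → ℝ :=
  fun x => (f (q * x) - f x) / (x * (q - 1))

/-- The q-Wronskian `W_n^q(f_1,…,f_n)(x) = det((∂_q^{i−1} f_j)(x))`. -/
noncomputable def qWronskian (q : ℝ) (n : ℕ) (f : Fin n → ℝ → ℝ) (x : ℝ) : ℝ :=
  Matrix.det (Matrix.of fun i j : Fin n => (qDeriv q)^[(i : ℕ)] (f j) x)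

/-- The Darboux transform generated by `h`: `(D_h g)(x) = h(qx)·(∂_q(g/h))(x)`. -/
noncomputable def qDarboux (q : ℝ) (h g : ℝ → ℝ) : ℝ → ℝ :=
  fun x => h (q * x) * qDeriv q (fun y => g y / h y) x

/-- The recursively Darboux-transformed family: `Φ_j^{(0)} = Φ j` and
`Φ_j^{(i+1)} = D_{Φ_{i+1}^{(i)}} Φ_j^{(i)}` (generating functions are `Φ 1, Φ 2, …`). -/
noncomputable def qDarbouxFam (q : ℝ) (Φ : ℕ → ℝ → ℝ) : ℕ → ℕ → (ℝ → ℝ)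
  | 0, j => Φ j
  | i + 1, j => qDarboux q (qDarbouxFam q Φ i (i + 1)) (qDarbouxFam q Φ i j)

noncomputable def qc (q : ℝ) : ℕ → ℕ → ℝ → ℝ
  | 0, 0, _ => 1
  | 0, _+1, _ => 0
  | i+1, 0, x => (0 - qc q i 0 x) / (x * (q - 1))
  | i+1, k+1, x => (qc q i k (q * x) - qc q i (k+1) x) / (x * (q - 1))

lemma qc_tri (q : ℝ) : ∀ (i k : ℕ) (x : ℝ), i < k → qc q i k x = 0 := by
  intro i
  induction i with
  | zero =>
    intro k x hk
    match k, hk with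
    | k+1, _ => rfl
  | succ i ih =>
    intro k x hk
    match k, hk with
    | k+1, hk =>
      show (qc q i k (q * x) - qc q i (k+1) x) / (x * (q - 1)) = 0
      rw [ih k (q*x) (by omega), ih (k+1) x (by omega)]
      simp

lemma qc_expand (q : ℝ) (hq0 : q ≠ 0) (f : ℝ → ℝ) :
    ∀ (i : ℕ) (x : ℝ), x ≠ 0 →
      (qDeriv q)^[i] f x = ∑ k ∈ Finset.range (i+1), qc q i k x * f (q^k * x) := by
  intro i
  induction i with
  | zero => intro x hx; simp [qc]
  | succ i ih =>
    intro x hx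
    rw [Function.iterate_succ_apply']
    show ((qDeriv q)^[i] f (q * x) - (qDeriv q)^[i] f x) / (x * (q - 1)) = _
    rw [ih (q*x) (mul_ne_zero hq0 hx), ih x hx]
    have h1 : (∑ k ∈ Finset.range (i+1), qc q i k (q*x) * f (q^k * (q * x)))
        = ∑ k ∈ Finset.range (i+1), qc q i k (q*x) * f (q^(k+1) * x) := by
      refine Finset.sum_congr rfl fun k _ => ?_
      rw [show q ^ k * (q * x) = q ^ (k+1) * x by ring]
    have h2 : (∑ k ∈ Finset.range (i+1), qc q i k x * f (q^k * x))
        = ∑ k ∈ Finset.range (i+1), qc q i (k+1) x * f (q^(k+1) * x)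
          + qc q i 0 x * f (q^0 * x) := by
      have e1 : (∑ k ∈ Finset.range (i+2), qc q i k x * f (q^k * x))
          = ∑ k ∈ Finset.range (i+1), qc q i k x * f (q^k * x) := by
        rw [Finset.sum_range_succ, qc_tri q i (i+1) x (by omega)]
        simp
      rw [← e1, Finset.sum_range_succ' (fun k => qc q i k x * f (q^k * x)) (i+1)]
    have h3 : (∑ k ∈ Finset.range (i+2), qc q (i+1) k x * f (q^k * x))
        = ∑ k ∈ Finset.range (i+1), qc q (i+1) (k+1) x * f (q^(k+1) * x)
          + qc q (i+1) 0 x * f (q^0 * x) :=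
      Finset.sum_range_succ' (fun k => qc q (i+1) k x * f (q^k * x)) (i+1)
    rw [h1, h2, h3]
    have h4 : ∀ k, qc q (i+1) (k+1) x = (qc q i k (q * x) - qc q i (k+1) x) / (x * (q - 1)) :=
      fun k => rfl
    have h5 : qc q (i+1) 0 x = (0 - qc q i 0 x) / (x * (q - 1)) := rfl
    simp only [h4, h5]
    rw [sub_add_eq_sub_sub, sub_div, ← Finset.sum_sub_distrib, Finset.sum_div, sub_eq_add_neg]
    congr 1
    · refine Finset.sum_congr rfl fun k _ => ?_
      ring
    · ring

lemma qc_diag_succ (q : ℝ) (i : ℕ) (x : ℝ) :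
    qc q (i+1) (i+1) x = qc q i i (q * x) / (x * (q - 1)) := by
  show (qc q i i (q * x) - qc q i (i+1) x) / (x * (q - 1)) = _
  rw [qc_tri q i (i+1) x (by omega)]
  ring

lemma qc_diag_ne (q : ℝ) (hq0 : q ≠ 0) (hq1 : q ≠ 1) :
    ∀ (i : ℕ) (x : ℝ), x ≠ 0 → qc q i i x ≠ 0 := by
  intro i
  induction i with
  | zero => intro x _; show (1 : ℝ) ≠ 0; norm_num
  | succ i ih =>
    intro x hx
    rw [qc_diag_succ]
    exact div_ne_zero (ih (q*x) (mul_ne_zero hq0 hx))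
      (mul_ne_zero hx (sub_ne_zero.2 hq1))

/-- q-Wronskian as product of diagonal coefficients times Casorati determinant. -/
lemma qWronskian_eq_cas (q : ℝ) (hq0 : q ≠ 0) (m : ℕ) (F : Fin m → ℝ → ℝ) (x : ℝ)
    (hx : x ≠ 0) :
    qWronskian q m F x = (∏ i : Fin m, qc q i i x) *
      Matrix.det (Matrix.of fun i k : Fin m => F k (q^(i:ℕ) * x)) := by
  have key : (Matrix.of fun i j : Fin m => (qDeriv q)^[(i : ℕ)] (F j) x)
      = (Matrix.of fun i k : Fin m => qc q i k x) *
        (Matrix.of fun i k : Fin m => F k (q^(i:ℕ) * x)) := by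
    ext i j
    simp only [Matrix.mul_apply, Matrix.of_apply]
    rw [qc_expand q hq0 (F j) i x hx]
    have hsub : (∑ k ∈ Finset.range ((i:ℕ)+1), qc q i k x * F j (q^k * x))
        = ∑ k ∈ Finset.range m, qc q i k x * F j (q^k * x) := by
      refine Finset.sum_subset (Finset.range_subset_range.2 i.isLt) fun k _ hk => ?_
      rw [qc_tri q i k x (by simp [Finset.mem_range] at hk ⊢; omega)]
      ring
    rw [hsub, ← Fin.sum_univ_eq_sum_range (fun k => qc q i k x * F j (q^k * x)) m]
  rw [qWronskian, key, Matrix.det_mul]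
  congr 1
  rw [Matrix.det_of_lowerTriangular _ ?_]
  · rfl
  · intro i j hij
    exact qc_tri q i j x hij

open Matrix in
/-- bordered determinant -/
noncomputable def bord {N : ℕ} (D : Matrix (Fin N) (Fin N) ℝ) (R : Matrix (Fin 2) (Fin N) ℝ)
    (C : Matrix (Fin N) (Fin 2) ℝ) (S : Matrix (Fin 2) (Fin 2) ℝ) (a b : Fin 2) : ℝ :=
  (Matrix.fromBlocks D (Matrix.of fun i (_ : Fin 1) => C i b)
    (Matrix.of fun (_ : Fin 1) j => R a j) (Matrix.of fun _ _ => S a b)).det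

open Matrix in
lemma schur_key {N : ℕ} (D : Matrix (Fin N) (Fin N) ℝ) (hD : IsUnit D.det)
    (R : Matrix (Fin 2) (Fin N) ℝ) (C : Matrix (Fin N) (Fin 2) ℝ)
    (S : Matrix (Fin 2) (Fin 2) ℝ) :
    (Matrix.fromBlocks D C R S).det * D.det =
      bord D R C S 0 0 * bord D R C S 1 1 - bord D R C S 0 1 * bord D R C S 1 0 := by
  haveI : Invertible D := D.invertibleOfIsUnitDet hD
  have hb : ∀ a b, bord D R C S a b = D.det * (S a b - (R * ⅟D * C) a b) := by
    intro a b
    rw [bord, Matrix.det_fromBlocks₁₁]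
    congr 1
    rw [Matrix.det_fin_one]
    simp [Matrix.mul_apply, Matrix.sub_apply, Finset.sum_mul, Finset.mul_sum]
  rw [Matrix.det_fromBlocks₁₁, hb, hb, hb, hb, Matrix.det_fin_two]
  simp only [Matrix.sub_apply]
  ring

lemma val_finRotate {n : ℕ} (i : Fin (n+1)) :
    ((finRotate (n+1)) i : ℕ) = if (i:ℕ) = n then 0 else (i:ℕ)+1 := by
  rw [finRotate_succ_apply, Fin.val_add_one]
  rcases eq_or_ne i (Fin.last n) with h|h
  · simp [h]
  · rw [if_neg h, if_neg (by simpa [Fin.ext_iff] using h)]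

lemma det_rot {M : ℕ} (P : Matrix (Fin (M+1)) (Fin (M+1)) ℝ) :
    P.det = (-1)^M * (P.submatrix (finRotate (M+1)) id).det := by
  rw [Matrix.det_permute, sign_finRotate]
  push_cast
  rw [← mul_assoc, ← mul_pow]
  norm_num

lemma det_swap_rows {M : ℕ} (P : Matrix (Fin M) (Fin M) ℝ) (a b : Fin M) (h : a ≠ b) :
    P.det = - (P.submatrix (Equiv.swap a b) id).det := by
  rw [Matrix.det_permute, Equiv.Perm.sign_swap h]
  push_cast
  ring

lemma det_eq_fromBlocks {N k : ℕ} (M : Matrix (Fin (N+k)) (Fin (N+k)) ℝ)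
    (A : Matrix (Fin N ⊕ Fin k) (Fin N ⊕ Fin k) ℝ)
    (h : ∀ s t, A s t = M (finSumFinEquiv s) (finSumFinEquiv t)) : A.det = M.det := by
  rw [show A = M.submatrix finSumFinEquiv finSumFinEquiv from by ext s t; exact h s t]
  exact Matrix.det_submatrix_equiv_self _ _

/-- The Desnanot–Jacobi style identity for the grid `g`, bordered rows `0, N+1` and
columns `N, N+1`, assuming the inner determinant is nonzero. -/
lemma cas_dj (g : ℕ → ℕ → ℝ) (N : ℕ)
    (hD : Matrix.det (Matrix.of fun i k : Fin N => g ((i:ℕ)+1) (k:ℕ)) ≠ 0) :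
    Matrix.det (Matrix.of fun i k : Fin (N+1) =>
        g ((i:ℕ)+1) (if (k:ℕ) = N then N+1 else (k:ℕ))) *
      Matrix.det (Matrix.of fun i k : Fin (N+1) => g (i:ℕ) (k:ℕ)) -
    Matrix.det (Matrix.of fun i k : Fin (N+1) =>
        g (i:ℕ) (if (k:ℕ) = N then N+1 else (k:ℕ))) *
      Matrix.det (Matrix.of fun i k : Fin (N+1) => g ((i:ℕ)+1) (k:ℕ)) =
    Matrix.det (Matrix.of fun i k : Fin N => g ((i:ℕ)+1) (k:ℕ)) *
      Matrix.det (Matrix.of fun i k : Fin (N+2) => g (i:ℕ) (k:ℕ)) := by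
  set D : Matrix (Fin N) (Fin N) ℝ := Matrix.of fun i k : Fin N => g ((i:ℕ)+1) (k:ℕ) with hDdef
  set R : Matrix (Fin 2) (Fin N) ℝ :=
    Matrix.of fun a k => g (if a = (0 : Fin 2) then 0 else N+1) (k:ℕ) with hRdef
  set C : Matrix (Fin N) (Fin 2) ℝ :=
    Matrix.of fun i b => g ((i:ℕ)+1) (N+(b:ℕ)) with hCdef
  set S : Matrix (Fin 2) (Fin 2) ℝ :=
    Matrix.of fun a b => g (if a = (0 : Fin 2) then 0 else N+1) (N+(b:ℕ)) with hSdef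
  have hs := schur_key D (isUnit_iff_ne_zero.2 hD) R C S
  -- b11
  have e11 : Matrix.det (Matrix.of fun i k : Fin (N+1) =>
      g ((i:ℕ)+1) (if (k:ℕ) = N then N+1 else (k:ℕ))) = bord D R C S 1 1 := by
    rw [bord]
    refine (det_eq_fromBlocks _ _ fun s t => ?_).symm
    cases s <;> cases t <;>
      simp [Matrix.fromBlocks, hDdef, hRdef, hCdef, hSdef, Fin.ext_iff,
        (Fin.is_lt _).ne, -Fin.val_eq_zero_iff]
  -- b10
  have e10 : Matrix.det (Matrix.of fun i k : Fin (N+1) => g ((i:ℕ)+1) (k:ℕ))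
      = bord D R C S 1 0 := by
    rw [bord]
    refine (det_eq_fromBlocks _ _ fun s t => ?_).symm
    cases s <;> cases t <;>
      simp [Matrix.fromBlocks, hDdef, hRdef, hCdef, hSdef, Fin.ext_iff,
        (Fin.is_lt _).ne, -Fin.val_eq_zero_iff]
  -- b00
  have e00 : Matrix.det (Matrix.of fun i k : Fin (N+1) => g (i:ℕ) (k:ℕ))
      = (-1)^N * bord D R C S 0 0 := by
    rw [det_rot]
    congr 1
    rw [bord]
    refine (det_eq_fromBlocks _ _ fun s t => ?_).symm
    cases s <;> cases t <;>
      simp [Matrix.fromBlocks, hDdef, hRdef, hCdef, hSdef, Fin.ext_iff,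
        Matrix.submatrix_apply, val_finRotate, (Fin.is_lt _).ne,
        Fin.val_add_one, Fin.val_last, -Fin.val_eq_zero_iff]
  -- b01
  have e01 : Matrix.det (Matrix.of fun i k : Fin (N+1) =>
      g (i:ℕ) (if (k:ℕ) = N then N+1 else (k:ℕ))) = (-1)^N * bord D R C S 0 1 := by
    rw [det_rot]
    congr 1
    rw [bord]
    refine (det_eq_fromBlocks _ _ fun s t => ?_).symm
    cases s <;> cases t <;>
      simp [Matrix.fromBlocks, hDdef, hRdef, hCdef, hSdef, Fin.ext_iff,
        Matrix.submatrix_apply, val_finRotate, (Fin.is_lt _).ne,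
        Fin.val_add_one, Fin.val_last, -Fin.val_eq_zero_iff]
  -- big
  have ebig : Matrix.det (Matrix.of fun i k : Fin (N+2) => g (i:ℕ) (k:ℕ))
      = (-1)^N * (Matrix.fromBlocks D C R S).det := by
    set aN : Fin (N+2) := ⟨N, by omega⟩ with haN
    set aN1 : Fin (N+2) := ⟨N+1, by omega⟩ with haN1
    have hne : aN ≠ aN1 := by simp [haN, haN1, Fin.ext_iff]
    rw [det_rot ((Matrix.of fun i k : Fin (N+2) => g (i:ℕ) (k:ℕ)))]
    rw [det_swap_rows _ aN aN1 hne]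
    have hblocks : (Matrix.fromBlocks D C R S).det =
        ((((Matrix.of fun i k : Fin (N+2) => g (i:ℕ) (k:ℕ))).submatrix
          (finRotate (N+2)) id).submatrix (Equiv.swap aN aN1) id).det := by
      refine det_eq_fromBlocks _ _ fun s t => ?_
      cases s with
      | inl i =>
        have hswap : Equiv.swap aN aN1 (Fin.castAdd 2 i) = Fin.castAdd 2 i := by
          refine Equiv.swap_apply_of_ne_of_ne ?_ ?_ <;>
            simp [haN, haN1, Fin.ext_iff, (i.is_lt).ne] <;> omega
        cases t <;>
          simp [Matrix.fromBlocks, hDdef, hCdef, Matrix.submatrix_apply, hswap,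
            val_finRotate, Fin.ext_iff, (Fin.is_lt _).ne, Fin.val_add_one, Fin.val_last] <;>
          rw [if_neg (by omega)]
      | inr b =>
        have hb : (finSumFinEquiv (Sum.inr b) : Fin (N+2)) = if b = 0 then aN else aN1 := by
          fin_cases b <;> simp [haN, haN1, Fin.ext_iff]
        fin_cases b
        · rw [hb]
          have hswap : Equiv.swap aN aN1 (if (0 : Fin 2) = 0 then aN else aN1) = aN1 := by
            simp [Equiv.swap_apply_left]
          cases t <;>
            simp [Matrix.fromBlocks, hRdef, hSdef, Matrix.submatrix_apply, hswap,
              val_finRotate, Fin.ext_iff, (Fin.is_lt _).ne, Fin.val_add_one, Fin.val_last, haN1, -Fin.val_eq_zero_iff]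
        · rw [hb]
          have hswap : Equiv.swap aN aN1 (if (1 : Fin 2) = 0 then aN else aN1) = aN := by
            simp [Equiv.swap_apply_right]
          cases t <;>
            simp [Matrix.fromBlocks, hRdef, hSdef, Matrix.submatrix_apply, hswap,
              val_finRotate, Fin.ext_iff, (Fin.is_lt _).ne, Fin.val_add_one, Fin.val_last, haN, -Fin.val_eq_zero_iff]
    rw [hblocks]
    ring
  rw [e11, e00, e01, e10, ebig]
  linear_combination (-((-1:ℝ)^N)) * hs

/-- The n-fold Darboux transform of `φ = Φ (n+1)` generated by `φ_i = Φ i` (`i = 1,…,n`) is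
the ratio of q-Wronskians
`φ^{(n)}(x) = W_{n+1}^q(φ_1,…,φ_n,φ)(x) / W_n^q(φ_1,…,φ_n)(x)`. -/
theorem qDarboux_iter_eq_wronskian_ratio (q : ℝ) (hq0 : q ≠ 0) (hq1 : q ≠ 1)
    (n : ℕ) (hn : 1 ≤ n) (Φ : ℕ → ℝ → ℝ)
    (hW : ∀ i : ℕ, 1 ≤ i → i ≤ n → ∀ x : ℝ, x ≠ 0 →
      qWronskian q i (fun j : Fin i => Φ ((j : ℕ) + 1)) x ≠ 0) :
    ∀ x : ℝ, x ≠ 0 →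
      qDarbouxFam q Φ n (n + 1) x =
        qWronskian q (n + 1) (fun j : Fin (n + 1) => Φ ((j : ℕ) + 1)) x /
          qWronskian q n (fun j : Fin n => Φ ((j : ℕ) + 1)) x := by
  have hq1' : q - 1 ≠ 0 := sub_ne_zero.2 hq1
  have hWall : ∀ i, i ≤ n → ∀ x : ℝ, x ≠ 0 →
      qWronskian q i (fun k : Fin i => Φ ((k:ℕ)+1)) x ≠ 0 := by
    intro i hi x hx
    rcases Nat.eq_zero_or_pos i with h|h
    · subst h
      rw [qWronskian]
      rw [Matrix.det_isEmpty]
      norm_num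
    · exact hW i h hi x hx
  have key : ∀ m, m ≤ n → ∀ j, m+1 ≤ j → ∀ x : ℝ, x ≠ 0 →
      qDarbouxFam q Φ m j x =
        qWronskian q (m+1) (fun k : Fin (m+1) =>
          if (k:ℕ) = m then Φ j else Φ ((k:ℕ)+1)) x /
          qWronskian q m (fun k : Fin m => Φ ((k:ℕ)+1)) x := by
    intro m
    induction m with
    | zero =>
      intro _ j _ x hx
      show Φ j x = _
      have e0 : qWronskian q 0 (fun k : Fin 0 => Φ ((k:ℕ)+1)) x = 1 := by
        rw [qWronskian]; exact Matrix.det_isEmpty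
      have e1 : qWronskian q (0+1) (fun k : Fin (0+1) =>
          if (k:ℕ) = 0 then Φ j else Φ ((k:ℕ)+1)) x = Φ j x := by
        haveI : Unique (Fin (0+1)) := inferInstanceAs (Unique (Fin 1))
        rw [qWronskian, Matrix.det_unique]
        simp
      rw [e0, e1]
      simp
    | succ m ih =>
      intro hm j hj x hx
      have hm' : m ≤ n := by omega
      have hqx : q * x ≠ 0 := mul_ne_zero hq0 hx
      have hxq1 : x * (q - 1) ≠ 0 := mul_ne_zero hx hq1'
      -- the plain (m+1)-tuple as an "if" tuple
      have hFm : (fun k : Fin (m+1) => if (k:ℕ) = m then Φ (m+1) else Φ ((k:ℕ)+1))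
          = fun k : Fin (m+1) => Φ ((k:ℕ)+1) := by
        funext k
        by_cases h : (k:ℕ) = m
        · rw [if_pos h, h]
        · rw [if_neg h]
      have h1 := ih hm' (m+1) le_rfl x hx
      have h2 := ih hm' (m+1) le_rfl (q*x) hqx
      have h3 := ih hm' j (by omega) x hx
      have h4 := ih hm' j (by omega) (q*x) hqx
      rw [hFm] at h1 h2
      -- nonvanishing
      have hA : qWronskian q m (fun k : Fin m => Φ ((k:ℕ)+1)) x ≠ 0 :=
        hWall m (by omega) x hx
      have hA' : qWronskian q m (fun k : Fin m => Φ ((k:ℕ)+1)) (q*x) ≠ 0 :=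
        hWall m (by omega) (q*x) hqx
      have hB : qWronskian q (m+1) (fun k : Fin (m+1) => Φ ((k:ℕ)+1)) x ≠ 0 :=
        hWall (m+1) hm x hx
      have hB' : qWronskian q (m+1) (fun k : Fin (m+1) => Φ ((k:ℕ)+1)) (q*x) ≠ 0 :=
        hWall (m+1) hm (q*x) hqx
      -- the value grid
      set g : ℕ → ℕ → ℝ := fun r c => (if c = m+1 then Φ j else Φ (c+1)) (q^r * x) with hg
      have hpow : ∀ i : ℕ, q^i * (q*x) = q^(i+1) * x := by intro i; ring
      -- conversions of the six q-Wronskians to coefficient × Casoratian form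
      have cB : qWronskian q (m+1) (fun k : Fin (m+1) => Φ ((k:ℕ)+1)) x
          = (∏ i : Fin (m+1), qc q i i x) *
            Matrix.det (Matrix.of fun i k : Fin (m+1) => g (i:ℕ) (k:ℕ)) := by
        rw [qWronskian_eq_cas q hq0 (m+1) _ x hx]
        congr 2
        ext i k
        have hk := k.isLt
        simp only [Matrix.of_apply, hg]
        rw [if_neg (by omega : ¬(k:ℕ) = m+1)]
      have cB' : qWronskian q (m+1) (fun k : Fin (m+1) => Φ ((k:ℕ)+1)) (q*x)
          = (∏ i : Fin (m+1), qc q i i (q*x)) *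
            Matrix.det (Matrix.of fun i k : Fin (m+1) => g ((i:ℕ)+1) (k:ℕ)) := by
        rw [qWronskian_eq_cas q hq0 (m+1) _ (q*x) hqx]
        congr 2
        ext i k
        have hk := k.isLt
        simp only [Matrix.of_apply, hg, hpow]
        rw [if_neg (by omega : ¬(k:ℕ) = m+1)]
      have cBj : qWronskian q (m+1)
            (fun k : Fin (m+1) => if (k:ℕ) = m then Φ j else Φ ((k:ℕ)+1)) x
          = (∏ i : Fin (m+1), qc q i i x) *
            Matrix.det (Matrix.of fun i k : Fin (m+1) =>
              g (i:ℕ) (if (k:ℕ) = m then m+1 else (k:ℕ))) := by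
        rw [qWronskian_eq_cas q hq0 (m+1) _ x hx]
        congr 2
        ext i k
        have hk := k.isLt
        by_cases h : (k:ℕ) = m
        · simp [Matrix.of_apply, hg, h]
        · simp only [Matrix.of_apply, hg, if_neg h]
          rw [if_neg (by omega : ¬(k:ℕ) = m+1)]
      have cBj' : qWronskian q (m+1)
            (fun k : Fin (m+1) => if (k:ℕ) = m then Φ j else Φ ((k:ℕ)+1)) (q*x)
          = (∏ i : Fin (m+1), qc q i i (q*x)) *
            Matrix.det (Matrix.of fun i k : Fin (m+1) =>
              g ((i:ℕ)+1) (if (k:ℕ) = m then m+1 else (k:ℕ))) := by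
        rw [qWronskian_eq_cas q hq0 (m+1) _ (q*x) hqx]
        congr 2
        ext i k
        have hk := k.isLt
        by_cases h : (k:ℕ) = m
        · simp [Matrix.of_apply, hg, hpow, h]
        · simp only [Matrix.of_apply, hg, hpow, if_neg h]
          rw [if_neg (by omega : ¬(k:ℕ) = m+1)]
      have cA' : qWronskian q m (fun k : Fin m => Φ ((k:ℕ)+1)) (q*x)
          = (∏ i : Fin m, qc q i i (q*x)) *
            Matrix.det (Matrix.of fun i k : Fin m => g ((i:ℕ)+1) (k:ℕ)) := by
        rw [qWronskian_eq_cas q hq0 m _ (q*x) hqx]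
        congr 2
        ext i k
        have hk := k.isLt
        simp only [Matrix.of_apply, hg, hpow]
        rw [if_neg (by omega : ¬(k:ℕ) = m+1)]
      have cCj : qWronskian q (m+2)
            (fun k : Fin (m+2) => if (k:ℕ) = m+1 then Φ j else Φ ((k:ℕ)+1)) x
          = (∏ i : Fin (m+2), qc q i i x) *
            Matrix.det (Matrix.of fun i k : Fin (m+2) => g (i:ℕ) (k:ℕ)) := by
        rw [qWronskian_eq_cas q hq0 (m+2) _ x hx]
      -- the inner Casorati determinant is nonzero
      have hDne : Matrix.det (Matrix.of fun i k : Fin m => g ((i:ℕ)+1) (k:ℕ)) ≠ 0 := by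
        intro hc
        exact hA' (by rw [cA', hc, mul_zero])
      have dj := cas_dj g m hDne
      -- scalar relation between the coefficient products
      have hscal : (∏ i : Fin (m+1), qc q i i (q*x)) * (∏ i : Fin (m+1), qc q i i x)
          = (x*(q-1)) * ((∏ i : Fin m, qc q i i (q*x)) * (∏ i : Fin (m+2), qc q i i x)) := by
        rw [Fin.prod_univ_castSucc (fun i : Fin (m+1) => qc q i i (q*x)),
          Fin.prod_univ_castSucc (fun i : Fin (m+2) => qc q i i x)]
        simp only [Fin.coe_castSucc, Fin.val_last]
        rw [show qc q (m+1) (m+1) x = qc q m m (q*x) / (x*(q-1)) from qc_diag_succ q m x]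
        field_simp
      -- the q-Wronskian Desnanot–Jacobi identity
      have star : qWronskian q (m+1)
            (fun k : Fin (m+1) => if (k:ℕ) = m then Φ j else Φ ((k:ℕ)+1)) (q*x) *
          qWronskian q (m+1) (fun k : Fin (m+1) => Φ ((k:ℕ)+1)) x -
          qWronskian q (m+1)
            (fun k : Fin (m+1) => if (k:ℕ) = m then Φ j else Φ ((k:ℕ)+1)) x *
          qWronskian q (m+1) (fun k : Fin (m+1) => Φ ((k:ℕ)+1)) (q*x)
          = (x*(q-1)) * qWronskian q m (fun k : Fin m => Φ ((k:ℕ)+1)) (q*x) *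
            qWronskian q (m+2)
              (fun k : Fin (m+2) => if (k:ℕ) = m+1 then Φ j else Φ ((k:ℕ)+1)) x := by
        rw [cBj', cB, cBj, cB', cA', cCj]
        linear_combination
          ((∏ i : Fin (m+1), qc q i i (q*x)) * (∏ i : Fin (m+1), qc q i i x)) * dj +
          ((Matrix.det (Matrix.of fun i k : Fin m => g ((i:ℕ)+1) (k:ℕ))) *
            (Matrix.det (Matrix.of fun i k : Fin (m+2) => g (i:ℕ) (k:ℕ)))) * hscal
      -- finish
      show qDarboux q (qDarbouxFam q Φ m (m+1)) (qDarbouxFam q Φ m j) x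
          = qWronskian q (m+2)
              (fun k : Fin (m+2) => if (k:ℕ) = m+1 then Φ j else Φ ((k:ℕ)+1)) x /
            qWronskian q (m+1) (fun k : Fin (m+1) => Φ ((k:ℕ)+1)) x
      rw [qDarboux]
      simp only [qDeriv]
      rw [h2, h4, h1, h3]
      set A := qWronskian q m (fun k : Fin m => Φ ((k:ℕ)+1)) x with hA_def
      set A' := qWronskian q m (fun k : Fin m => Φ ((k:ℕ)+1)) (q*x) with hA'_def
      set B := qWronskian q (m+1) (fun k : Fin (m+1) => Φ ((k:ℕ)+1)) x with hB_def
      set B' := qWronskian q (m+1) (fun k : Fin (m+1) => Φ ((k:ℕ)+1)) (q*x) with hB'_def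
      set Bj := qWronskian q (m+1)
        (fun k : Fin (m+1) => if (k:ℕ) = m then Φ j else Φ ((k:ℕ)+1)) x with hBj_def
      set Bj' := qWronskian q (m+1)
        (fun k : Fin (m+1) => if (k:ℕ) = m then Φ j else Φ ((k:ℕ)+1)) (q*x) with hBj'_def
      set Cb := qWronskian q (m+2)
        (fun k : Fin (m+2) => if (k:ℕ) = m+1 then Φ j else Φ ((k:ℕ)+1)) x with hCb_def
      have star2 : Bj' * B - B' * Bj = x*(q-1)*(A'*Cb) := by linear_combination star
      have t1 : Bj'/A' / (B'/A') = Bj' / B' := by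
        rw [div_div_div_cancel_right₀]; exact hA'
      have t2 : Bj/A / (B/A) = Bj / B := by
        rw [div_div_div_cancel_right₀]; exact hA
      rw [t1, t2, div_sub_div _ _ hB' hB, star2]
      field_simp
  intro x hx
  have := key n le_rfl (n+1) le_rfl x hx
  rw [this]
  congr 2
  funext k
  by_cases h : (k:ℕ) = n
  · rw [if_pos h, h]
  · rw [if_neg h]
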